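/- Suppose μ/ν is a skew shape padded to length n with μ_i = ν_i for some i ∈ [n], and let μ̂, ν̂ denote μ and ν with their i-th components removed (length n-1 sequences). Then for every w' ∈ S_{{1,...,i-1}} × S_{{i+1,...,n}}, the multiset of entries of μ + δ^n - w'(ν + δ^n) equals the multiset of entries of μ̂ + δ^{n-1} - (c_i w' c_i^{-1})(ν̂ + δ^{n-1}), where c_i = (n, n-1, ..., i) in cycle notation and δ^m = (m-1,...,1,0). In particular K_{θ, μ+δ^n-w'(ν+δ^n)} = K_{θ, μ̂+δ^{n-1}-(c_i w' c_i^{-1})(ν̂+δ^{n-1})} for all partitions θ. -/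

import Mathlib

open Equiv

/-- `T i j` is the entry of a filling in row `i`, column `j` (0-based);
entries outside the diagram of `shape` are `0`.  Rows weakly increase,
columns strictly increase. -/
def IsSSYT (shape : ℕ → ℕ) (T : ℕ → ℕ → ℕ) : Prop :=
  (∀ i j, j + 1 < shape i → T i j ≤ T i (j + 1)) ∧
  (∀ i j, j < shape (i + 1) → T i j < T (i + 1) j) ∧
  (∀ i j, shape i ≤ j → T i j = 0)

/-- The Kostka number: the number of semistandard Young tableaux of the given
shape in which the entry `m` appears exactly `c m` times. -/
noncomputable def kostka (shape : ℕ → ℕ) (c : ℕ → ℕ) : ℕ :=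
  Set.ncard {T : ℕ → ℕ → ℕ | IsSSYT shape T ∧
    ∀ m : ℕ, {p : ℕ × ℕ | p.2 < shape p.1 ∧ T p.1 p.2 = m}.ncard = c m}

open Classical in
/-- Kostka number for an integer content, with the convention that it is `0`
whenever the content has a negative entry. -/
noncomputable def kostkaZ (shape : ℕ → ℕ) (c : ℕ → ℤ) : ℕ :=
  if ∀ m, 0 ≤ c m then kostka shape (fun m => (c m).toNat) else 0

/-- The hook shape `(N - k, 1, ..., 1)` with `k` trailing rows of length 1. -/
def hookShape (N k : ℕ) : ℕ → ℕ :=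
  fun i => if i = 0 then N - k else if i ≤ k then 1 else 0

/-- Extend a sequence indexed by `Fin n` to all of `ℕ` by zeros. -/
def extendSeq {n : ℕ} (a : Fin n → ℤ) : ℕ → ℤ :=
  fun m => if h : m < n then a ⟨m, h⟩ else 0

/-- The staircase `δ = (n-1, n-2, ..., 1, 0)`. -/
def deltaSeq (n : ℕ) : Fin n → ℤ := fun i => (n : ℤ) - 1 - (i.val : ℤ)

/-- The sequence `μ + δ - w(ν + δ)`, where a permutation acts on sequences by
shuffling: `(w(a))_i = a_{w⁻¹(i)}`. -/
def hatSeq {n : ℕ} (μ ν : Fin n → ℕ) (w : Perm (Fin n)) : Fin n → ℤ :=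
  fun i => ((μ i : ℤ) + deltaSeq n i) - ((ν (w⁻¹ i) : ℤ) + deltaSeq n (w⁻¹ i))

/-- `h` is the Hessenberg function of the skew shape `μ/ν`:
`h j = max { i | μ i - ν j + j - i ≥ 0 }`. -/
def IsHessOf {n : ℕ} (μ ν : Fin n → ℕ) (h : Fin n → Fin n) : Prop :=
  ∀ j : Fin n, (ν j + ((h j : ℕ)) ≤ μ (h j) + (j : ℕ)) ∧
    ∀ i : Fin n, ν j + (i : ℕ) ≤ μ i + (j : ℕ) → i ≤ h j

/-- The indicator `ĥ(w)` of the condition `w(i) ≤ h(i)` for all `i`. -/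
def hhat {n : ℕ} (h : Fin n → Fin n) (w : Perm (Fin n)) : ℕ :=
  if ∀ i, w i ≤ h i then 1 else 0

/-- The modified Hessenberg function `h^J`: `h^J(i) = h(i) - 1` when `i ∈ J` and
`μ_{h(i)} - ν_i + i - h(i) = 0`, and `h^J(i) = h(i)` otherwise. -/
def hJfun {n : ℕ} (μ ν : Fin n → ℕ) (h : Fin n → Fin n) (J : Finset (Fin n)) :
    Fin n → Fin n :=
  fun i => if i ∈ J ∧ μ (h i) + (i : ℕ) = ν i + ((h i : ℕ)) then
      ⟨(h i : ℕ) - 1, Nat.lt_of_le_of_lt (Nat.sub_le _ _) (h i).isLt⟩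
    else h i

open Classical in
/-- The conjugacy class of `w` in the symmetric group, as a finset. -/
noncomputable def conjClass {n : ℕ} (w : Perm (Fin n)) : Finset (Perm (Fin n)) :=
  Finset.univ.filter (fun v => IsConj w v)

/-- The Stanley–Stembridge character
`Γ_h(w) = (n! / |C(w)|) · Σ_{w' ∈ C(w)} ĥ(w')`. -/
noncomputable def GammaH {n : ℕ} (h : Fin n → Fin n) (w : Perm (Fin n)) : ℚ :=
  ((n.factorial : ℚ) / ((conjClass w).card : ℚ)) * ∑ v ∈ conjClass w, (hhat h v : ℚ)

/-- The immanant character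
`Γ^θ_{μ/ν}(w) = (n! / |C(w)|) · Σ_{w' ∈ C(w)} K_{θ, μ+δ-w'(ν+δ)}`. -/
noncomputable def GammaTheta {n : ℕ} (shape : ℕ → ℕ) (μ ν : Fin n → ℕ)
    (w : Perm (Fin n)) : ℚ :=
  ((n.factorial : ℚ) / ((conjClass w).card : ℚ)) *
    ∑ v ∈ conjClass w, (kostkaZ shape (extendSeq (hatSeq μ ν v)) : ℚ)

lemma ssyt_col_strict {shape : ℕ → ℕ} (hs : Antitone shape) {T : ℕ → ℕ → ℕ}
    (hT : IsSSYT shape T) {j : ℕ} :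
    ∀ {r1 r2 : ℕ}, r1 < r2 → j < shape r2 → T r1 j < T r2 j := by
  intro r1 r2
  induction r2 with
  | zero => intro h; exact absurd h (Nat.not_lt_zero _)
  | succ r ih =>
    intro h12 hj
    rcases Nat.lt_or_ge r1 r with h | h
    · exact (ih h (lt_of_lt_of_le hj (hs (Nat.le_succ r)))).trans (hT.2.1 r j hj)
    · have : r1 = r := by omega
      subst this
      exact hT.2.1 r1 j hj

lemma ssyt_level_finite {shape : ℕ → ℕ} (hs : Antitone shape) {T : ℕ → ℕ → ℕ}
    (hT : IsSSYT shape T) (m : ℕ) :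
    {p : ℕ × ℕ | p.2 < shape p.1 ∧ T p.1 p.2 = m}.Finite := by
  apply Set.Finite.of_finite_image (f := Prod.snd)
  · apply (Set.finite_Iio (shape 0)).subset
    rintro j ⟨⟨r, j'⟩, ⟨h1, _⟩, rfl⟩
    exact lt_of_lt_of_le h1 (hs (Nat.zero_le r))
  · rintro ⟨r1, j1⟩ hp1 ⟨r2, j2⟩ hp2 (h : j1 = j2)
    subst h
    simp only [Set.mem_setOf_eq] at hp1 hp2
    obtain ⟨h1, e1⟩ := hp1
    obtain ⟨h2, e2⟩ := hp2
    rcases lt_trichotomy r1 r2 with h | h | h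
    · exact absurd (ssyt_col_strict hs hT h h2) (by omega)
    · simp [h]
    · exact absurd (ssyt_col_strict hs hT h h1) (by omega)

private def eraseMapF (i x : ℕ) : ℕ := if x < i then x else x - 1
private def eraseMapG (i x : ℕ) : ℕ := if x < i then x else x + 1
private def eraseT (shape : ℕ → ℕ) (i : ℕ) (T : ℕ → ℕ → ℕ) : ℕ → ℕ → ℕ :=
  fun r j => if j < shape r then eraseMapF i (T r j) else 0
private def insT (shape : ℕ → ℕ) (i : ℕ) (U : ℕ → ℕ → ℕ) : ℕ → ℕ → ℕ :=
  fun r j => if j < shape r then eraseMapG i (U r j) else 0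

lemma kostka_erase_zero {shape : ℕ → ℕ} (hs : Antitone shape) (i : ℕ) {c : ℕ → ℕ}
    (hc : c i = 0) :
    kostka shape c = kostka shape (fun m => if m < i then c m else c (m + 1)) := by
  classical
  set S1 := {T : ℕ → ℕ → ℕ | IsSSYT shape T ∧
    ∀ m : ℕ, {p : ℕ × ℕ | p.2 < shape p.1 ∧ T p.1 p.2 = m}.ncard = c m} with hS1
  set S2 := {T : ℕ → ℕ → ℕ | IsSSYT shape T ∧
    ∀ m : ℕ, {p : ℕ × ℕ | p.2 < shape p.1 ∧ T p.1 p.2 = m}.ncard =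
      (if m < i then c m else c (m + 1))} with hS2
  have hne : ∀ T ∈ S1, ∀ r j, j < shape r → T r j ≠ i := by
    intro T hT r j hj he
    have hfin := ssyt_level_finite hs hT.1 i
    have h0 := hT.2 i
    rw [hc] at h0
    have hempty : {p : ℕ × ℕ | p.2 < shape p.1 ∧ T p.1 p.2 = i} = ∅ :=
      (Set.ncard_eq_zero hfin).mp h0
    have : ((r, j) : ℕ × ℕ) ∈ {p : ℕ × ℕ | p.2 < shape p.1 ∧ T p.1 p.2 = i} := ⟨hj, he⟩
    rw [hempty] at this
    exact this
  have himg : eraseT shape i '' S1 = S2 := by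
    apply Set.Subset.antisymm
    · rintro _ ⟨T, hT, rfl⟩
      have hTne := hne T hT
      obtain ⟨⟨hrow, hcol, hout⟩, hcont⟩ := hT
      refine ⟨⟨?_, ?_, ?_⟩, ?_⟩
      · intro r j hj
        have hj' : j < shape r := by omega
        have := hrow r j hj
        simp only [eraseT, if_pos hj', if_pos hj, eraseMapF]
        split_ifs <;> omega
      · intro r j hj
        have hj' : j < shape r := lt_of_lt_of_le hj (hs (Nat.le_succ r))
        have hlt := hcol r j hj
        have h1 := hTne r j hj'
        have h2 := hTne (r + 1) j hj
        simp only [eraseT, if_pos hj', if_pos hj, eraseMapF]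
        split_ifs <;> omega
      · intro r j hj
        simp only [eraseT, if_neg (by omega : ¬ j < shape r)]
      · intro m
        have hset : {p : ℕ × ℕ | p.2 < shape p.1 ∧ eraseT shape i T p.1 p.2 = m}
            = {p : ℕ × ℕ | p.2 < shape p.1 ∧ T p.1 p.2 = eraseMapG i m} := by
          ext ⟨r, j⟩
          simp only [Set.mem_setOf_eq, eraseT, eraseMapF, eraseMapG]
          constructor
          · rintro ⟨hj, he⟩
            rw [if_pos hj] at he
            have := hTne r j hj
            refine ⟨hj, ?_⟩
            split_ifs at he ⊢ <;> omega
          · rintro ⟨hj, he⟩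
            have := hTne r j hj
            refine ⟨hj, ?_⟩
            rw [if_pos hj]
            split_ifs at he ⊢ <;> omega
        rw [hset, hcont (eraseMapG i m)]
        simp only [eraseMapG]
        split_ifs <;> rfl
    · intro U hU
      obtain ⟨⟨hrow, hcol, hout⟩, hcont⟩ := hU
      have hUI : insT shape i U ∈ S1 := by
        refine ⟨⟨?_, ?_, ?_⟩, ?_⟩
        · intro r j hj
          have hj' : j < shape r := by omega
          have := hrow r j hj
          simp only [insT, if_pos hj', if_pos hj, eraseMapG]
          split_ifs <;> omega
        · intro r j hj
          have hj' : j < shape r := lt_of_lt_of_le hj (hs (Nat.le_succ r))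
          have hlt := hcol r j hj
          simp only [insT, if_pos hj', if_pos hj, eraseMapG]
          split_ifs <;> omega
        · intro r j hj
          simp only [insT, if_neg (by omega : ¬ j < shape r)]
        · intro m
          by_cases hm : m = i
          · have hset : {p : ℕ × ℕ | p.2 < shape p.1 ∧ insT shape i U p.1 p.2 = m} = ∅ := by
              ext ⟨r, j⟩
              simp only [Set.mem_setOf_eq, insT, eraseMapG, Set.mem_empty_iff_false,
                iff_false, not_and]
              intro hj
              rw [if_pos hj]
              split_ifs <;> omega
            rw [hset, Set.ncard_empty, hm, hc]
          · have hset : {p : ℕ × ℕ | p.2 < shape p.1 ∧ insT shape i U p.1 p.2 = m}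
                = {p : ℕ × ℕ | p.2 < shape p.1 ∧ U p.1 p.2 = eraseMapF i m} := by
              ext ⟨r, j⟩
              simp only [Set.mem_setOf_eq, insT, eraseMapG, eraseMapF]
              constructor
              · rintro ⟨hj, he⟩
                rw [if_pos hj] at he
                refine ⟨hj, ?_⟩
                split_ifs at he ⊢ <;> omega
              · rintro ⟨hj, he⟩
                refine ⟨hj, ?_⟩
                rw [if_pos hj]
                split_ifs at he ⊢ <;> omega
            rw [hset, hcont (eraseMapF i m)]
            rcases Nat.lt_or_ge m i with h | h
            · have hFm : eraseMapF i m = m := if_pos h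
              rw [hFm, if_pos h]
            · have hgt : i < m := by omega
              have hFm : eraseMapF i m = m - 1 := if_neg (by omega)
              rw [hFm, if_neg (by omega : ¬ (m - 1 < i))]
              congr 1
              omega
      refine ⟨insT shape i U, hUI, ?_⟩
      funext r j
      by_cases hj : j < shape r
      · simp only [eraseT, insT, if_pos hj, eraseMapF, eraseMapG]
        split_ifs <;> omega
      · simp only [eraseT, if_neg hj]
        exact (hout r j (by omega)).symm
  have hinj : Set.InjOn (eraseT shape i) S1 := by
    intro T1 h1 T2 h2 he
    funext r j
    by_cases hj : j < shape r
    · have e1 := congrFun (congrFun he r) j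
      simp only [eraseT, if_pos hj, eraseMapF] at e1
      have n1 := hne T1 h1 r j hj
      have n2 := hne T2 h2 r j hj
      split_ifs at e1 <;> omega
    · rw [h1.1.2.2 r j (by omega), h2.1.2.2 r j (by omega)]
  show S1.ncard = S2.ncard
  rw [← himg, Set.ncard_image_of_injOn hinj]

/-- key step of Proposition A.2: if `μ_i = ν_i`, then for any
`w'` in the Young subgroup fixing `i` and preserving `{0,...,i-1}`, the multiset
of entries of `μ + δ - w'(ν + δ)` is the multiset of entries of
`μ̂ + δ - ŵ(ν̂ + δ)` together with an extra `0`, where `μ̂, ν̂` are obtained by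
deleting the `i`-th rows and `ŵ = c_i w' c_i⁻¹` is the induced permutation.
In particular the corresponding Kostka numbers agree for every partition. -/
theorem stmt11 {n : ℕ} (μ ν : Fin (n + 1) → ℕ) (hμ : Antitone μ) (hν : Antitone ν)
    (hle : ∀ j, ν j ≤ μ j) (i : Fin (n + 1)) (hi : μ i = ν i)
    (w' : Perm (Fin (n + 1))) (hw1 : ∀ k, k < i → w' k < i) (hw2 : w' i = i)
    (what : Perm (Fin n))
    (hwhat : ∀ k : Fin n, i.succAbove (what k) = w' (i.succAbove k)) :
    (Finset.univ.val.map (hatSeq μ ν w') =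
      (0 : ℤ) ::ₘ Finset.univ.val.map
        (hatSeq (fun j => μ (i.succAbove j)) (fun j => ν (i.succAbove j)) what)) ∧
    ∀ shape : ℕ → ℕ, Antitone shape →
      kostkaZ shape (extendSeq (hatSeq μ ν w')) =
        kostkaZ shape (extendSeq
          (hatSeq (fun j => μ (i.succAbove j)) (fun j => ν (i.succAbove j)) what)) := by
  
  have hwinv : w'⁻¹ i = i := Perm.inv_eq_iff_eq.mpr hw2.symm
  have hzero : hatSeq μ ν w' i = 0 := by
    simp only [hatSeq, hwinv]
    rw [hi]
    ring
  have hinv2 : ∀ k : Fin n, w'⁻¹ (i.succAbove k) = i.succAbove (what⁻¹ k) := by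
    intro k
    have h := hwhat (what⁻¹ k)
    rw [show what (what⁻¹ k) = k from what.apply_symm_apply k] at h
    rw [h, show w'⁻¹ (w' (i.succAbove (what⁻¹ k))) = i.succAbove (what⁻¹ k) from
      w'.symm_apply_apply _]
  have hmaps : ∀ x : Fin (n + 1), w' x < i ↔ x < i := by
    classical
    have hsub : (Finset.univ.filter (fun x : Fin (n + 1) => x < i)).image w' ⊆
        Finset.univ.filter (fun x : Fin (n + 1) => x < i) := by
      intro y hy
      simp only [Finset.mem_image, Finset.mem_filter, Finset.mem_univ, true_and] at hy ⊢
      obtain ⟨x, hx, rfl⟩ := hy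
      exact hw1 x hx
    have heq := Finset.eq_of_subset_of_card_le hsub
      (le_of_eq (Finset.card_image_of_injective _ w'.injective).symm)
    intro x
    refine ⟨fun hx => ?_, hw1 x⟩
    have hmem : w' x ∈ (Finset.univ.filter (fun x : Fin (n + 1) => x < i)).image w' := by
      rw [heq]
      simp only [Finset.mem_filter, Finset.mem_univ, true_and]
      exact hx
    obtain ⟨y, hy, he⟩ := Finset.mem_image.mp hmem
    cases w'.injective he
    simpa using hy
  have hval : ∀ m : Fin n, ((i.succAbove m : Fin (n + 1)) : ℕ)
      = if (m : ℕ) < (i : ℕ) then (m : ℕ) else (m : ℕ) + 1 := by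
    intro m
    rcases Nat.lt_or_ge (m : ℕ) (i : ℕ) with h | h
    · have hc : Fin.castSucc m < i := by rw [Fin.lt_def]; simpa using h
      rw [Fin.succAbove_of_castSucc_lt _ _ hc, if_pos h, Fin.coe_castSucc]
    · have hc : i ≤ Fin.castSucc m := by rw [Fin.le_def]; simpa using h
      rw [Fin.succAbove_of_le_castSucc _ _ hc, if_neg (by omega), Fin.val_succ]
  have hltAbove : ∀ m : Fin n, (i.succAbove m < i ↔ (m : ℕ) < (i : ℕ)) := by
    intro m
    rw [Fin.lt_def, hval m]
    split_ifs with h <;> omega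
  have hwhatlt : ∀ k : Fin n, ((what k : ℕ) < (i : ℕ) ↔ (k : ℕ) < (i : ℕ)) := by
    intro k
    rw [← hltAbove (what k), hwhat k, hmaps, hltAbove]
  have hinvlt : ∀ k : Fin n, ((what⁻¹ k : ℕ) < (i : ℕ) ↔ (k : ℕ) < (i : ℕ)) := by
    intro k
    have h := hwhatlt (what⁻¹ k)
    rw [show what (what⁻¹ k) = k from what.apply_symm_apply k] at h
    exact h.symm
  have hdelta : ∀ m : Fin n, deltaSeq (n + 1) (i.succAbove m)
      = deltaSeq n m + (if (m : ℕ) < (i : ℕ) then 1 else 0) := by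
    intro m
    simp only [deltaSeq, hval m]
    split_ifs <;> push_cast <;> ring
  have hpoint : ∀ k : Fin n, hatSeq μ ν w' (i.succAbove k)
      = hatSeq (fun j => μ (i.succAbove j)) (fun j => ν (i.succAbove j)) what k := by
    intro k
    simp only [hatSeq, hinv2 k, hdelta]
    rcases Nat.lt_or_ge (k : ℕ) (i : ℕ) with h | h
    · rw [if_pos h, if_pos ((hinvlt k).mpr h)]
      ring
    · rw [if_neg (by omega), if_neg (fun hh => by have := (hinvlt k).mp hh; omega)]
      ring
  have hms : Finset.univ.val.map (hatSeq μ ν w') = (0 : ℤ) ::ₘ Finset.univ.val.map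
      (hatSeq (fun j => μ (i.succAbove j)) (fun j => ν (i.succAbove j)) what) := by
    rw [Fin.univ_succAbove n i, Finset.cons_val, Multiset.map_cons, hzero, Finset.map_val,
      Multiset.map_map]
    congr 1
    refine Multiset.map_congr rfl (fun k _ => ?_)
    simp only [Function.comp_apply, Fin.coe_succAboveEmb]
    exact hpoint k
  refine ⟨hms, ?_⟩
  intro shape hs
  set a := hatSeq μ ν w' with ha
  set b := hatSeq (fun j => μ (i.succAbove j)) (fun j => ν (i.succAbove j)) what with hb
  have hA : (∀ m, 0 ≤ extendSeq a m) ↔ ∀ k : Fin (n + 1), 0 ≤ a k := by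
    constructor
    · intro h k
      have := h (k : ℕ)
      simpa [extendSeq, k.isLt] using this
    · intro h m
      unfold extendSeq
      split
      · exact h _
      · exact le_refl 0
  have hB : (∀ m, 0 ≤ extendSeq b m) ↔ ∀ k : Fin n, 0 ≤ b k := by
    constructor
    · intro h k
      have := h (k : ℕ)
      simpa [extendSeq, k.isLt] using this
    · intro h m
      unfold extendSeq
      split
      · exact h _
      · exact le_refl 0
  have hposiff : (∀ m, 0 ≤ extendSeq a m) ↔ (∀ m, 0 ≤ extendSeq b m) := by
    rw [hA, hB]
    constructor
    · intro h k
      rw [← hpoint k]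
      exact h _
    · intro h k
      by_cases hk : k = i
      · rw [hk, hzero]
      · obtain ⟨j, rfl⟩ := Fin.exists_succAbove_eq hk
        rw [hpoint j]
        exact h j
  by_cases hpos : ∀ m, 0 ≤ extendSeq b m
  · have hposa : ∀ m, 0 ≤ extendSeq a m := hposiff.mpr hpos
    unfold kostkaZ
    rw [if_pos hposa, if_pos hpos]
    set c1 : ℕ → ℕ := fun m => (extendSeq a m).toNat with hc1
    set c2 : ℕ → ℕ := fun m => (extendSeq b m).toNat with hc2
    have hc1i : c1 ((i : ℕ)) = 0 := by
      have he : extendSeq a (i : ℕ) = a i := by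
        simp [extendSeq, i.isLt]
      simp only [hc1]
      rw [he, hzero]
      rfl
    rw [kostka_erase_zero hs (i : ℕ) hc1i]
    congr 1
    funext m
    rcases Nat.lt_or_ge m (i : ℕ) with h | h
    · rw [if_pos h]
      have hmn : m < n := lt_of_lt_of_le h (by omega)
      have hmn1 : m < n + 1 := by omega
      have hlt : Fin.castSucc ⟨m, hmn⟩ < i := by
        rw [Fin.lt_def, Fin.coe_castSucc]
        exact h
      have hsa : i.succAbove ⟨m, hmn⟩ = ⟨m, hmn1⟩ := by
        rw [Fin.succAbove_of_castSucc_lt _ _ hlt]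
        apply Fin.ext
        simp
      simp only [hc1, hc2, extendSeq, dif_pos hmn1, dif_pos hmn]
      rw [← hsa, hpoint]
    · rw [if_neg (by omega)]
      rcases Nat.lt_or_ge m n with hmn | hmn
      · have hm1 : m + 1 < n + 1 := by omega
        have hle : i ≤ Fin.castSucc ⟨m, hmn⟩ := by
          rw [Fin.le_def, Fin.coe_castSucc]
          exact h
        have hsa : i.succAbove ⟨m, hmn⟩ = ⟨m + 1, hm1⟩ := by
          rw [Fin.succAbove_of_le_castSucc _ _ hle]
          apply Fin.ext
          simp
        simp only [hc1, hc2, extendSeq, dif_pos hm1, dif_pos hmn]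
        rw [← hsa, hpoint]
      · simp only [hc1, hc2, extendSeq, dif_neg (by omega : ¬ m + 1 < n + 1),
          dif_neg (by omega : ¬ m < n)]
  · unfold kostkaZ
    rw [if_neg (fun h => hpos (hposiff.mp h)), if_neg hpos]
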